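/- Let (u(x))_{x≥1} be i.i.d. ℕ-valued random variables with P(u(1) = k) = P_k and 0 < P_0 < 1; let U(x) = u(1) + ⋯ + u(x), V(x) = min{y : U(y) ≥ x}, and v(x) = V(x) − V(x−1). Set q̂(x) = P(v(x) ≥ 1). Then q̂(1) = 1 and, for every x ≥ 2, q̂(x) = (1 − P_0)^{−1} · Σ_{k=1}^{x−1} P_k · q̂(x − k). -/

import Mathlib

open MeasureTheory ProbabilityTheory
open scoped ENNReal

section RenAux

set_option linter.unusedSectionVars false

variable {Ω : Type*} [MeasurableSpace Ω]

/-- Partial sums `S(y) = u(1)+⋯+u(y)` indexed from `range y`. -/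
def renSt (u : ℕ → Ω → ℕ) (y : ℕ) (ω : Ω) : ℕ := ∑ i ∈ Finset.range y, u (i + 1) ω

/-- The random vector of the first `m` offspring variables. -/
def renVec (u : ℕ → Ω → ℕ) (m : ℕ) (ω : Ω) : Fin m → ℕ := fun i => u (i.1 + 1) ω

/-- Extension of a finite tuple by zeros. -/
def renExd {m : ℕ} (a : Fin m → ℕ) (i : ℕ) : ℕ := if h : i < m then a ⟨i, h⟩ else 0

/-- Partial sums of a finite tuple. -/
def renPS {m : ℕ} (a : Fin m → ℕ) (z : ℕ) : ℕ := ∑ i ∈ Finset.range z, renExd a i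

lemma renSt_succ (u : ℕ → Ω → ℕ) (y : ℕ) (ω : Ω) :
    renSt u (y + 1) ω = renSt u y ω + u (y + 1) ω := Finset.sum_range_succ _ _

lemma renSt_mono (u : ℕ → Ω → ℕ) (ω : Ω) {z y : ℕ} (h : z ≤ y) :
    renSt u z ω ≤ renSt u y ω :=
  Finset.sum_le_sum_of_subset (Finset.range_subset_range.2 h)

lemma renSt_zero (u : ℕ → Ω → ℕ) (ω : Ω) : renSt u 0 ω = 0 := by
  simp [renSt]

lemma renVec_exd (u : ℕ → Ω → ℕ) {m i : ℕ} (h : i < m) (ω : Ω) :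
    renExd (renVec u m ω) i = u (i + 1) ω := by
  simp [renExd, renVec, h]

lemma renSt_eq_pS (u : ℕ → Ω → ℕ) {z m : ℕ} (h : z ≤ m) (ω : Ω) :
    renSt u z ω = renPS (renVec u m ω) z := by
  refine Finset.sum_congr rfl fun i hi => ?_
  rw [renVec_exd u (lt_of_lt_of_le (Finset.mem_range.1 hi) h)]

lemma renSt_measurable {u : ℕ → Ω → ℕ} (hmeas : ∀ x, Measurable (u x)) (y : ℕ) :
    Measurable (renSt u y) :=
  Finset.measurable_sum _ fun i _ => hmeas (i + 1)

variable (μ : Measure Ω) [IsProbabilityMeasure μ] {u : ℕ → Ω → ℕ} {P : ℕ → ℝ≥0∞}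

lemma ren_atom (hindep : iIndepFun (fun n : ℕ => u (n + 1)) μ)
    (hdist : ∀ x : ℕ, 1 ≤ x → ∀ k : ℕ, μ {ω | u x ω = k} = P k)
    (m : ℕ) (a : ℕ → ℕ) :
    μ (⋂ i ∈ Finset.range m, {ω | u (i + 1) ω = a i}) = ∏ i ∈ Finset.range m, P (a i) := by
  have h := hindep.measure_inter_preimage_eq_mul (Finset.range m)
    (sets := fun i => ({a i} : Set ℕ)) (fun i _ => measurableSet_singleton _)
  have hset : ∀ i : ℕ, (fun n : ℕ => u (n + 1)) i ⁻¹' ({a i} : Set ℕ)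
      = {ω | u (i + 1) ω = a i} := fun i => rfl
  simp only [hset] at h
  rw [h]
  exact Finset.prod_congr rfl fun i _ => hdist (i + 1) (Nat.succ_le_succ (Nat.zero_le _)) (a i)

lemma ren_cyl (hmeas : ∀ x, Measurable (u x))
    (hindep : iIndepFun (fun n : ℕ => u (n + 1)) μ)
    (hdist : ∀ x : ℕ, 1 ≤ x → ∀ k : ℕ, μ {ω | u x ω = k} = P k)
    (m : ℕ) (B : Set (Fin m → ℕ)) :
    μ {ω | renVec u m ω ∈ B} = ∑' a : B, ∏ i ∈ Finset.range m, P (renExd a.1 i) := by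
  have hatom : ∀ a : Fin m → ℕ,
      {ω | renVec u m ω = a} = ⋂ i ∈ Finset.range m, {ω | u (i + 1) ω = renExd a i} := by
    intro a
    ext ω
    simp only [Set.mem_setOf_eq, Set.mem_iInter, Finset.mem_range]
    constructor
    · rintro rfl i hi
      rw [renVec_exd u hi]
    · intro h
      funext i
      have := h i.1 i.2
      simpa [renVec, renExd, i.2] using this
  have hdecomp : {ω | renVec u m ω ∈ B} = ⋃ a : B, {ω | renVec u m ω = a.1} := by
    ext ω
    simp only [Set.mem_setOf_eq, Set.mem_iUnion]
    exact ⟨fun h => ⟨⟨_, h⟩, rfl⟩, by rintro ⟨a, h⟩; rw [h]; exact a.2⟩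
  have : Countable B := Set.to_countable B
  rw [hdecomp, measure_iUnion ?_ ?_]
  · exact tsum_congr fun a => by rw [hatom, ren_atom μ hindep hdist]
  · intro a b hab
    simp only [Set.disjoint_left, Set.mem_setOf_eq]
    intro ω h1 h2
    exact hab (Subtype.ext (h1.symm.trans h2))
  · intro a
    rw [hatom]
    exact Finset.measurableSet_biInter _ fun i _ => (hmeas (i + 1)) (measurableSet_singleton _)


lemma ren_TL (hmeas : ∀ x, Measurable (u x))
    (hindep : iIndepFun (fun n : ℕ => u (n + 1)) μ)
    (hdist : ∀ x : ℕ, 1 ≤ x → ∀ k : ℕ, μ {ω | u x ω = k} = P k)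
    {m' m : ℕ} (hmm : m' ≤ m) (B : Set (Fin m' → ℕ)) (c : ℕ → ℕ) :
    μ ({ω | renVec u m' ω ∈ B} ∩ {ω | ∀ i, m' ≤ i → i < m → u (i + 1) ω = c i})
      = μ {ω | renVec u m' ω ∈ B} * ∏ i ∈ Finset.Ico m' m, P (c i) := by
  classical
  set D : Set (Fin m → ℕ) :=
    {a | (fun i : Fin m' => a ⟨i.1, lt_of_lt_of_le i.2 hmm⟩) ∈ B ∧
      ∀ i : Fin m, m' ≤ i.1 → a i = c i.1} with hD
  have hset : {ω | renVec u m' ω ∈ B} ∩ {ω | ∀ i, m' ≤ i → i < m → u (i + 1) ω = c i}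
      = {ω | renVec u m ω ∈ D} := by
    ext ω
    simp only [Set.mem_inter_iff, Set.mem_setOf_eq, hD]
    constructor
    · rintro ⟨h1, h2⟩
      exact ⟨h1, fun i hi => h2 i.1 hi i.2⟩
    · rintro ⟨h1, h2⟩
      exact ⟨h1, fun i hi him => h2 ⟨i, him⟩ hi⟩
  let e : B ≃ D :=
    { toFun := fun b => ⟨fun i : Fin m => if h : i.1 < m' then b.1 ⟨i.1, h⟩ else c i.1, by
        refine ⟨?_, ?_⟩
        · have : (fun i : Fin m' =>
              (fun i : Fin m => if h : i.1 < m' then b.1 ⟨i.1, h⟩ else c i.1)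
                ⟨i.1, lt_of_lt_of_le i.2 hmm⟩) = b.1 := by
            funext i; simp [i.2]
          rw [this]; exact b.2
        · intro i hi
          simp [Nat.not_lt.2 hi]⟩
      invFun := fun a => ⟨fun i : Fin m' => a.1 ⟨i.1, lt_of_lt_of_le i.2 hmm⟩, a.2.1⟩
      left_inv := fun b => by
        apply Subtype.ext; funext i; simp [i.2]
      right_inv := fun a => by
        apply Subtype.ext; funext i
        by_cases h : i.1 < m'
        · simp only [h, dif_pos]
        · simp only [h, dif_neg, not_false_iff]
          exact (a.2.2 i (Nat.not_lt.1 h)).symm }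
  rw [hset, ren_cyl μ hmeas hindep hdist m D, ren_cyl μ hmeas hindep hdist m' B,
    ← Equiv.tsum_eq e, ← ENNReal.tsum_mul_right]
  refine tsum_congr fun b => ?_
  have heb : ∀ (b : ↑B) (i : Fin m),
      (e b).1 i = if h : i.1 < m' then b.1 ⟨i.1, h⟩ else c i.1 := fun b i => rfl
  have hsplit : Finset.range m = Finset.range m' ∪ Finset.Ico m' m := by
    rw [Finset.range_eq_Ico, Finset.range_eq_Ico, Finset.Ico_union_Ico_eq_Ico (Nat.zero_le _) hmm]
  rw [hsplit, Finset.prod_union (by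
    simp only [Finset.range_eq_Ico]
    exact Finset.Ico_disjoint_Ico_consecutive 0 m' m)]
  congr 1
  · refine Finset.prod_congr rfl fun i hi => ?_
    have hi' : i < m' := Finset.mem_range.1 hi
    have him : i < m := lt_of_lt_of_le hi' hmm
    simp only [renExd, him, dif_pos, hi']
    rw [heb]
    simp [hi']
  · refine Finset.prod_congr rfl fun i hi => ?_
    obtain ⟨hi1, hi2⟩ := Finset.mem_Ico.1 hi
    have : renExd (e b).1 i = c i := by
      simp only [renExd, hi2, dif_pos]
      rw [heb]
      simp [Nat.not_lt.2 hi1]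
    rw [this]

def renF (u : ℕ → Ω → ℕ) (j y : ℕ) : Set Ω :=
  {ω | renSt u y ω = j ∧ ∀ z, z < y → renSt u z ω < j}

def renZ (u : ℕ → Ω → ℕ) (y' y : ℕ) : Set Ω :=
  {ω | ∀ i, y' ≤ i → i < y → u (i + 1) ω = 0}

def renE (u : ℕ → Ω → ℕ) (n y : ℕ) : Set Ω :=
  {ω | renSt u y ω < n ∧ renSt u (y + 1) ω = n}

def renH (μ : Measure Ω) (u : ℕ → Ω → ℕ) (j : ℕ) : ℝ≥0∞ :=
  μ {ω | ∃ y, renSt u y ω = j}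

variable {μ}

lemma renF_meas (hmeas : ∀ x, Measurable (u x)) (j y : ℕ) :
    MeasurableSet (renF u j y) := by
  have : renF u j y
      = (renSt u y) ⁻¹' {j} ∩ ⋂ z ∈ Finset.range y, (renSt u z) ⁻¹' (Set.Iio j) := by
    ext ω
    simp only [renF, Set.mem_setOf_eq, Set.mem_inter_iff, Set.mem_preimage,
      Set.mem_singleton_iff, Set.mem_iInter, Finset.mem_range, Set.mem_Iio]
  rw [this]
  exact ((renSt_measurable hmeas y) (measurableSet_singleton _)).inter
    (Finset.measurableSet_biInter _ fun z _ => (renSt_measurable hmeas z) measurableSet_Iio)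

lemma renZ_meas (hmeas : ∀ x, Measurable (u x)) (y' y : ℕ) :
    MeasurableSet (renZ u y' y) := by
  have : renZ u y' y = ⋂ i ∈ Finset.Ico y' y, (u (i + 1)) ⁻¹' {0} := by
    ext ω
    simp only [renZ, Set.mem_setOf_eq, Set.mem_iInter, Finset.mem_Ico, Set.mem_preimage,
      Set.mem_singleton_iff]
    exact ⟨fun h i hi => h i hi.1 hi.2, fun h i h1 h2 => h i ⟨h1, h2⟩⟩
  rw [this]
  exact Finset.measurableSet_biInter _ fun i _ => (hmeas (i + 1)) (measurableSet_singleton _)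

lemma renA_cyl (u : ℕ → Ω → ℕ) (y j : ℕ) :
    (renSt u y) ⁻¹' {j} = {ω | renVec u y ω ∈ {a : Fin y → ℕ | renPS a y = j}} := by
  ext ω
  simp only [Set.mem_preimage, Set.mem_singleton_iff, Set.mem_setOf_eq]
  rw [renSt_eq_pS u le_rfl ω]

lemma renF_cyl (u : ℕ → Ω → ℕ) (j y : ℕ) :
    renF u j y = {ω | renVec u y ω
      ∈ {a : Fin y → ℕ | renPS a y = j ∧ ∀ z, z < y → renPS a z < j}} := by
  ext ω
  simp only [renF, Set.mem_setOf_eq]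
  rw [renSt_eq_pS u le_rfl ω]
  refine and_congr Iff.rfl (forall_congr' fun z => ?_)
  refine imp_congr_right fun hz => ?_
  rw [renSt_eq_pS u hz.le ω]

lemma ren_FZ (hmeas : ∀ x, Measurable (u x))
    (hindep : iIndepFun (fun n : ℕ => u (n + 1)) μ)
    (hdist : ∀ x : ℕ, 1 ≤ x → ∀ k : ℕ, μ {ω | u x ω = k} = P k)
    {j y' y : ℕ} (h : y' ≤ y) :
    μ (renF u j y' ∩ renZ u y' y) = μ (renF u j y') * P 0 ^ (y - y') := by
  rw [renF_cyl]
  have hz : renZ u y' y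
      = {ω | ∀ i, y' ≤ i → i < y → u (i + 1) ω = (fun _ : ℕ => 0) i} := rfl
  rw [hz, ren_TL μ hmeas hindep hdist h _ _]
  rw [Finset.prod_const, Nat.card_Ico]

lemma ren_Ak (hmeas : ∀ x, Measurable (u x))
    (hindep : iIndepFun (fun n : ℕ => u (n + 1)) μ)
    (hdist : ∀ x : ℕ, 1 ≤ x → ∀ k : ℕ, μ {ω | u x ω = k} = P k)
    (y j k : ℕ) :
    μ ((renSt u y) ⁻¹' {j} ∩ {ω | u (y + 1) ω = k})
      = μ ((renSt u y) ⁻¹' {j}) * P k := by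
  rw [renA_cyl]
  have hset : {ω : Ω | u (y + 1) ω = k}
      = {ω | ∀ i, y ≤ i → i < y + 1 → u (i + 1) ω = (fun _ : ℕ => k) i} := by
    ext ω
    simp only [Set.mem_setOf_eq]
    constructor
    · intro hk i h1 h2
      have : i = y := by omega
      rw [this]; exact hk
    · intro h; exact h y le_rfl (Nat.lt_succ_self y)
  rw [hset, ren_TL μ hmeas hindep hdist (Nat.le_succ y) _ _,
    Nat.Ico_succ_singleton, Finset.prod_singleton]

lemma renF_disj (u : ℕ → Ω → ℕ) (j : ℕ) :
    Pairwise (Function.onFun Disjoint (renF u j)) := by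
  intro y1 y2 hne
  rw [Function.onFun, Set.disjoint_left]
  intro ω h1 h2
  rcases hne.lt_or_gt with hlt | hlt
  · have := h2.2 y1 hlt
    rw [h1.1] at this
    exact lt_irrefl _ this
  · have := h1.2 y2 hlt
    rw [h2.1] at this
    exact lt_irrefl _ this

lemma ren_h_eq (hmeas : ∀ x, Measurable (u x)) (j : ℕ) :
    renH μ u j = ∑' y, μ (renF u j y) := by
  classical
  have hset : {ω | ∃ y, renSt u y ω = j} = ⋃ y, renF u j y := by
    ext ω
    simp only [Set.mem_setOf_eq, Set.mem_iUnion]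
    constructor
    · intro hex
      refine ⟨Nat.find hex, Nat.find_spec hex, fun z hz => ?_⟩
      refine lt_of_le_of_ne ?_ (Nat.find_min hex hz)
      rw [← Nat.find_spec hex]
      exact renSt_mono u ω hz.le
    · rintro ⟨y, hy⟩
      exact ⟨y, hy.1⟩
  rw [renH, hset, measure_iUnion (renF_disj u j) (fun y => renF_meas hmeas j y)]

lemma ren_flat {u : ℕ → Ω → ℕ} {j y' y : ℕ} (h : y' ≤ y) {ω : Ω}
    (hF : ω ∈ renF u j y') (hZ : ω ∈ renZ u y' y) : renSt u y ω = j := by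
  have key : ∀ d, y' + d ≤ y → renSt u (y' + d) ω = j := by
    intro d
    induction d with
    | zero => intro _; simpa using hF.1
    | succ d ih =>
      intro hdy
      have h1 := ih (by omega)
      have h2 : y' + (d + 1) = (y' + d) + 1 := by omega
      rw [h2, renSt_succ, h1, hZ (y' + d) (by omega) (by omega)]
      omega
  have := key (y - y') (by omega)
  rwa [Nat.add_sub_cancel' h] at this

lemma ren_A_decomp (hmeas : ∀ x, Measurable (u x))
    (hindep : iIndepFun (fun n : ℕ => u (n + 1)) μ)
    (hdist : ∀ x : ℕ, 1 ≤ x → ∀ k : ℕ, μ {ω | u x ω = k} = P k)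
    (j y : ℕ) :
    μ ((renSt u y) ⁻¹' {j})
      = ∑ y' ∈ Finset.range (y + 1), μ (renF u j y') * P 0 ^ (y - y') := by
  classical
  have hset : (renSt u y) ⁻¹' {j}
      = ⋃ y' ∈ Finset.range (y + 1), (renF u j y' ∩ renZ u y' y) := by
    ext ω
    simp only [Set.mem_preimage, Set.mem_singleton_iff, Set.mem_iUnion, Finset.mem_range]
    constructor
    · intro hy
      have hex : ∃ z, renSt u z ω = j := ⟨y, hy⟩
      set y0 := Nat.find hex with hy0
      have hy0y : y0 ≤ y := Nat.find_min' hex hy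
      have hsty0 : renSt u y0 ω = j := Nat.find_spec hex
      refine ⟨y0, by omega, ⟨hsty0, fun z hz => ?_⟩, ?_⟩
      · refine lt_of_le_of_ne ?_ (Nat.find_min hex hz)
        rw [← hsty0]
        exact renSt_mono u ω hz.le
      · intro i h1 h2
        have hi : renSt u i ω = j := le_antisymm
          (by rw [← hy]; exact renSt_mono u ω (by omega))
          (by rw [← hsty0]; exact renSt_mono u ω h1)
        have hi1 : renSt u (i + 1) ω = j := le_antisymm
          (by rw [← hy]; exact renSt_mono u ω (by omega))
          (by rw [← hsty0]; exact renSt_mono u ω (by omega))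
        have := renSt_succ u i ω
        omega
    · rintro ⟨y', hy', hF, hZ⟩
      exact ren_flat (by omega) hF hZ
  rw [hset, measure_biUnion_finset ?_ ?_]
  · exact Finset.sum_congr rfl fun y' hy' =>
      ren_FZ hmeas hindep hdist (Nat.lt_succ_iff.1 (Finset.mem_range.1 hy'))
  · intro a _ b _ hab
    exact ((renF_disj u j) hab).mono Set.inter_subset_left Set.inter_subset_left
  · intro y' _
    exact (renF_meas hmeas j y').inter (renZ_meas hmeas y' y)

lemma ren_diag (g : ℕ → ℕ → ℝ≥0∞) :
    ∑' y : ℕ, ∑ y' ∈ Finset.range (y + 1), g y' (y - y') = ∑' y' : ℕ, ∑' d : ℕ, g y' d := by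
  have h1 : ∀ y : ℕ, ∑ y' ∈ Finset.range (y + 1), g y' (y - y')
      = ∑ p ∈ Finset.HasAntidiagonal.antidiagonal y, g p.1 p.2 := fun y =>
    (Finset.Nat.sum_antidiagonal_eq_sum_range_succ (fun a b => g a b) y).symm
  simp only [h1]
  have h2 : ∀ y : ℕ, ∑ p ∈ Finset.HasAntidiagonal.antidiagonal y, g p.1 p.2
      = ∑' (p : {q : ℕ × ℕ // q ∈ Finset.HasAntidiagonal.antidiagonal y}), g p.1.1 p.1.2 := fun y =>
    (Finset.tsum_subtype (Finset.HasAntidiagonal.antidiagonal y) (fun p : ℕ × ℕ => g p.1 p.2)).symm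
  simp only [h2]
  rw [← ENNReal.tsum_sigma' (fun q : (Σ y : ℕ, {p : ℕ × ℕ // p ∈ Finset.HasAntidiagonal.antidiagonal y}) => g q.2.1.1 q.2.1.2)]
  rw [← ENNReal.tsum_prod]
  exact Finset.HasAntidiagonal.sigmaAntidiagonalEquivProd.tsum_eq (fun p : ℕ × ℕ => g p.1 p.2)

lemma ren_G (hmeas : ∀ x, Measurable (u x))
    (hindep : iIndepFun (fun n : ℕ => u (n + 1)) μ)
    (hdist : ∀ x : ℕ, 1 ≤ x → ∀ k : ℕ, μ {ω | u x ω = k} = P k)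
    (j : ℕ) :
    ∑' y, μ ((renSt u y) ⁻¹' {j}) = renH μ u j * (1 - P 0)⁻¹ := by
  calc ∑' y, μ ((renSt u y) ⁻¹' {j})
      = ∑' y, ∑ y' ∈ Finset.range (y + 1), μ (renF u j y') * P 0 ^ (y - y') :=
        tsum_congr fun y => ren_A_decomp hmeas hindep hdist j y
    _ = ∑' y', ∑' d, μ (renF u j y') * P 0 ^ d :=
        ren_diag (fun y' d => μ (renF u j y') * P 0 ^ d)
    _ = ∑' y', μ (renF u j y') * (1 - P 0)⁻¹ := tsum_congr fun y' => by
        rw [ENNReal.tsum_mul_left, ENNReal.tsum_geometric]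
    _ = (∑' y', μ (renF u j y')) * (1 - P 0)⁻¹ := ENNReal.tsum_mul_right
    _ = renH μ u j * (1 - P 0)⁻¹ := by rw [ren_h_eq hmeas]

lemma ren_rec (hmeas : ∀ x, Measurable (u x))
    (hindep : iIndepFun (fun n : ℕ => u (n + 1)) μ)
    (hdist : ∀ x : ℕ, 1 ≤ x → ∀ k : ℕ, μ {ω | u x ω = k} = P k)
    {n : ℕ} (hn : 1 ≤ n) :
    renH μ u n = ∑ j ∈ Finset.range n, renH μ u j * (1 - P 0)⁻¹ * P (n - j) := by
  classical
  have hE_eq : ∀ y, renE u n y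
      = (renSt u y) ⁻¹' (Set.Iio n) ∩ (renSt u (y + 1)) ⁻¹' {n} := fun y => rfl
  have hE_meas : ∀ y, MeasurableSet (renE u n y) := fun y => by
    rw [hE_eq]
    exact ((renSt_measurable hmeas y) measurableSet_Iio).inter
      ((renSt_measurable hmeas (y + 1)) (measurableSet_singleton _))
  have hset : {ω | ∃ y, renSt u y ω = n} = ⋃ y, renE u n y := by
    ext ω
    simp only [Set.mem_setOf_eq, Set.mem_iUnion]
    constructor
    · intro hex
      have hne : Nat.find hex ≠ 0 := by
        intro h0
        have := Nat.find_spec hex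
        rw [h0, renSt_zero] at this
        omega
      obtain ⟨z, hz⟩ := Nat.exists_eq_succ_of_ne_zero hne
      refine ⟨z, ?_, ?_⟩
      · refine lt_of_le_of_ne ?_ (Nat.find_min hex (by omega))
        have : renSt u (Nat.find hex) ω = n := Nat.find_spec hex
        rw [← this]
        exact renSt_mono u ω (by omega)
      · have : renSt u (Nat.find hex) ω = n := Nat.find_spec hex
        rwa [hz] at this
    · rintro ⟨y, hy⟩
      exact ⟨y + 1, hy.2⟩
  have hdisj : Pairwise (Function.onFun Disjoint (renE u n)) := by
    intro y1 y2 hne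
    rw [Function.onFun, Set.disjoint_left]
    intro ω h1 h2
    rcases hne.lt_or_gt with hlt | hlt
    · have hmono : renSt u (y1 + 1) ω ≤ renSt u y2 ω := renSt_mono u ω (by omega)
      have := h2.1
      rw [h1.2] at hmono
      omega
    · have hmono : renSt u (y2 + 1) ω ≤ renSt u y1 ω := renSt_mono u ω (by omega)
      have := h1.1
      rw [h2.2] at hmono
      omega
  have hE_decomp : ∀ y, μ (renE u n y)
      = ∑ j ∈ Finset.range n, μ ((renSt u y) ⁻¹' {j}) * P (n - j) := by
    intro y
    have hset2 : renE u n y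
        = ⋃ j ∈ Finset.range n, ((renSt u y) ⁻¹' {j} ∩ {ω | u (y + 1) ω = n - j}) := by
      ext ω
      simp only [renE, Set.mem_setOf_eq, Set.mem_iUnion, Finset.mem_range,
        Set.mem_inter_iff, Set.mem_preimage, Set.mem_singleton_iff]
      constructor
      · intro ⟨h1, h2⟩
        have := renSt_succ u y ω
        exact ⟨renSt u y ω, h1, rfl, by omega⟩
      · rintro ⟨j, hj, hj2, hj3⟩
        have := renSt_succ u y ω
        constructor
        · omega
        · omega
    rw [hset2, measure_biUnion_finset ?_ ?_]
    · exact Finset.sum_congr rfl fun j _ => ren_Ak hmeas hindep hdist y j (n - j)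
    · intro a _ b _ hab
      rw [Function.onFun, Set.disjoint_left]
      intro ω h1 h2
      exact hab (h1.1.symm.trans h2.1)
    · intro j _
      exact ((renSt_measurable hmeas y) (measurableSet_singleton _)).inter
        ((hmeas (y + 1)) (measurableSet_singleton _))
  calc renH μ u n = μ (⋃ y, renE u n y) := by rw [renH, hset]
    _ = ∑' y, μ (renE u n y) := measure_iUnion hdisj hE_meas
    _ = ∑' y, ∑ j ∈ Finset.range n, μ ((renSt u y) ⁻¹' {j}) * P (n - j) :=
        tsum_congr hE_decomp
    _ = ∑ j ∈ Finset.range n, ∑' y, μ ((renSt u y) ⁻¹' {j}) * P (n - j) :=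
        Summable.tsum_finsetSum fun i _ => ENNReal.summable
    _ = ∑ j ∈ Finset.range n, renH μ u j * (1 - P 0)⁻¹ * P (n - j) := by
        refine Finset.sum_congr rfl fun j _ => ?_
        rw [ENNReal.tsum_mul_right, ren_G hmeas hindep hdist j]

lemma ren_h_zero : renH μ u 0 = 1 := by
  have : {ω : Ω | ∃ y, renSt u y ω = 0} = Set.univ := by
    ext ω
    simp only [Set.mem_setOf_eq, Set.mem_univ, iff_true]
    exact ⟨0, renSt_zero u ω⟩
  rw [renH, this, measure_univ]

end RenAux



lemma ren_zero_tail_null {Ω : Type*} [MeasurableSpace Ω] {μ : Measure Ω}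
    [IsProbabilityMeasure μ] {u : ℕ → Ω → ℕ} {P : ℕ → ℝ≥0∞}
    (hindep : iIndepFun (fun n : ℕ => u (n + 1)) μ)
    (hdist : ∀ x : ℕ, 1 ≤ x → ∀ k : ℕ, μ {ω | u x ω = k} = P k)
    (hP0lt : P 0 < 1) (m : ℕ) :
    μ {ω | ∀ i, m ≤ i → u (i + 1) ω = 0} = 0 := by
  have hbound : ∀ k : ℕ, μ {ω | ∀ i, m ≤ i → u (i + 1) ω = 0} ≤ P 0 ^ k := by
    intro k
    have hsub : {ω | ∀ i, m ≤ i → u (i + 1) ω = 0}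
        ⊆ ⋂ i ∈ Finset.Ico m (m + k), (fun n : ℕ => u (n + 1)) i ⁻¹' ({0} : Set ℕ) := by
      intro ω hω
      simp only [Set.mem_iInter, Finset.mem_Ico, Set.mem_preimage, Set.mem_singleton_iff]
      intro i hi
      exact hω i hi.1
    refine le_trans (measure_mono hsub) ?_
    have hprod := hindep.measure_inter_preimage_eq_mul (Finset.Ico m (m + k))
      (sets := fun _ => ({0} : Set ℕ)) (fun i _ => measurableSet_singleton _)
    rw [hprod]
    have : ∀ i ∈ Finset.Ico m (m + k),
        μ ((fun n : ℕ => u (n + 1)) i ⁻¹' ({0} : Set ℕ)) = P 0 := by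
      intro i _
      have : ((fun n : ℕ => u (n + 1)) i ⁻¹' ({0} : Set ℕ)) = {ω | u (i + 1) ω = 0} := rfl
      rw [this]
      exact hdist (i + 1) (by omega) 0
    rw [Finset.prod_congr rfl this, Finset.prod_const, Nat.card_Ico]
    simp
  have htend : Filter.Tendsto (fun k : ℕ => P 0 ^ k) Filter.atTop (nhds 0) :=
    ENNReal.tendsto_pow_atTop_nhds_zero_of_lt_one hP0lt
  exact le_zero_iff.1 (ge_of_tendsto' htend hbound)

lemma ren_unbounded_null {Ω : Type*} [MeasurableSpace Ω] {μ : Measure Ω}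
    [IsProbabilityMeasure μ] {u : ℕ → Ω → ℕ} {P : ℕ → ℝ≥0∞}
    (hindep : iIndepFun (fun n : ℕ => u (n + 1)) μ)
    (hdist : ∀ x : ℕ, 1 ≤ x → ∀ k : ℕ, μ {ω | u x ω = k} = P k)
    (hP0lt : P 0 < 1) :
    μ {ω | ¬ ∀ n, ∃ y, n ≤ renSt u y ω} = 0 := by
  have hsub : {ω | ¬ ∀ n, ∃ y, n ≤ renSt u y ω}
      ⊆ ⋃ m, {ω | ∀ i, m ≤ i → u (i + 1) ω = 0} := by
    intro ω hω
    by_contra hmem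
    simp only [Set.mem_iUnion, Set.mem_setOf_eq] at hmem
    push_neg at hmem
    apply hω
    intro n
    induction n with
    | zero => exact ⟨0, Nat.zero_le _⟩
    | succ n ih =>
      obtain ⟨y, hy⟩ := ih
      obtain ⟨i, hi1, hi2⟩ := hmem y
      refine ⟨i + 1, ?_⟩
      have h1 : renSt u y ω ≤ renSt u i ω := renSt_mono u ω hi1
      have h2 := renSt_succ u i ω
      omega
  refine le_zero_iff.1 (le_trans (measure_mono hsub) ?_)
  rw [measure_iUnion_null fun m => ren_zero_tail_null hindep hdist hP0lt m]

/-- Recursion for `q̂(x) = P(v(x) ≥ 1)`: `q̂(1) = 1` and, for `x ≥ 2`,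
`q̂(x) = (1 - P₀)⁻¹ ∑_{k=1}^{x-1} P_k q̂(x-k)`. -/
theorem stmt_12 {Ω : Type*} [MeasurableSpace Ω] (μ : Measure Ω) [IsProbabilityMeasure μ]
    (u : ℕ → Ω → ℕ) (hmeas : ∀ x : ℕ, Measurable (u x))
    (hindep : iIndepFun (fun n : ℕ => u (n + 1)) μ)
    (P : ℕ → ℝ≥0∞) (hdist : ∀ x : ℕ, 1 ≤ x → ∀ k : ℕ, μ {ω | u x ω = k} = P k)
    (hP0pos : 0 < P 0) (hP0lt : P 0 < 1)
    (U : Ω → ℕ → ℕ) (hU : ∀ ω : Ω, ∀ x : ℕ, U ω x = ∑ i ∈ Finset.Icc 1 x, u i ω)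
    (V : Ω → ℕ → ℕ) (hV : ∀ ω : Ω, ∀ x : ℕ, V ω x = sInf {y : ℕ | x ≤ U ω y})
    (v : ℕ → Ω → ℕ) (hv : ∀ x : ℕ, 1 ≤ x → ∀ ω : Ω, v x ω = V ω x - V ω (x - 1))
    (qhat : ℕ → ℝ≥0∞) (hq : ∀ x : ℕ, 1 ≤ x → qhat x = μ {ω | 1 ≤ v x ω}) :
    qhat 1 = 1 ∧
      ∀ x : ℕ, 2 ≤ x →
        qhat x = (1 - P 0)⁻¹ * ∑ k ∈ Finset.Icc 1 (x - 1), P k * qhat (x - k) := by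
  have hUS : ∀ ω y, U ω y = renSt u y ω := by
    intro ω y
    rw [hU]
    induction y with
    | zero => simp [renSt]
    | succ y ih =>
      rw [Finset.sum_Icc_succ_top (by omega : 1 ≤ y + 1), ih, renSt_succ]
  set N : Set Ω := {ω | ¬ ∀ n, ∃ y, n ≤ renSt u y ω} with hNdef
  have hN : μ N = 0 := ren_unbounded_null hindep hdist hP0lt
  have hμA : ∀ A : Set Ω, μ A = μ (A ∩ Nᶜ) := by
    intro A
    refine le_antisymm ?_ (measure_mono Set.inter_subset_left)
    calc μ A ≤ μ ((A ∩ Nᶜ) ∪ N) := measure_mono (by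
          intro ω hω
          by_cases h : ω ∈ N
          · exact Or.inr h
          · exact Or.inl ⟨hω, h⟩)
      _ ≤ μ (A ∩ Nᶜ) + μ N := measure_union_le _ _
      _ = μ (A ∩ Nᶜ) := by rw [hN, add_zero]
  have hmain : ∀ x, 1 ≤ x → μ {ω | 1 ≤ v x ω} = renH μ u (x - 1) := by
    intro x hx
    have hpt : ∀ ω, ω ∉ N → (1 ≤ v x ω ↔ ∃ y, renSt u y ω = x - 1) := by
      intro ω hω
      simp only [hNdef, Set.mem_setOf_eq, not_not] at hω
      have hV' : ∀ t, V ω t = sInf {y | t ≤ renSt u y ω} := by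
        intro t
        rw [hV]
        congr 1
        ext y
        simp only [Set.mem_setOf_eq, hUS]
      have hmem : ∀ t, t ≤ renSt u (V ω t) ω := by
        intro t
        rw [hV']
        exact Nat.sInf_mem (hω t)
      have hle : ∀ t z, t ≤ renSt u z ω → V ω t ≤ z := by
        intro t z hz
        rw [hV']
        exact Nat.sInf_le hz
      rw [hv x hx]
      constructor
      · intro h1
        refine ⟨V ω (x - 1), ?_⟩
        have hxm : renSt u (V ω (x - 1)) ω < x := by
          by_contra hcon
          push_neg at hcon
          have := hle x _ hcon
          omega
        have := hmem (x - 1)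
        omega
      · rintro ⟨y, hy⟩
        have h1 : V ω (x - 1) ≤ y := hle _ _ (by omega)
        have h2 : renSt u (V ω (x - 1)) ω ≤ renSt u y ω := renSt_mono u ω h1
        have h4 := hmem x
        have h5 : V ω (x - 1) ≤ V ω x := hle _ _ (le_trans (by omega) h4)
        have h6 : V ω (x - 1) ≠ V ω x := by
          intro heq
          rw [← heq] at h4
          omega
        omega
    have hAB : {ω | 1 ≤ v x ω} ∩ Nᶜ = {ω | ∃ y, renSt u y ω = x - 1} ∩ Nᶜ := by
      ext ω
      simp only [Set.mem_inter_iff, Set.mem_compl_iff, Set.mem_setOf_eq]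
      constructor
      · rintro ⟨h1, h2⟩
        exact ⟨(hpt ω h2).1 h1, h2⟩
      · rintro ⟨h1, h2⟩
        exact ⟨(hpt ω h2).2 h1, h2⟩
    rw [hμA {ω | 1 ≤ v x ω}, hAB, renH, hμA {ω | ∃ y, renSt u y ω = x - 1}]
  constructor
  · rw [hq 1 le_rfl, hmain 1 le_rfl]
    exact ren_h_zero
  · intro x hx
    rw [hq x (by omega), hmain x (by omega),
      ren_rec hmeas hindep hdist (n := x - 1) (by omega), Finset.mul_sum]
    have hterm : ∀ k ∈ Finset.Icc 1 (x - 1),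
        (1 - P 0)⁻¹ * (P k * qhat (x - k))
          = (1 - P 0)⁻¹ * (P k * renH μ u (x - 1 - k)) := by
      intro k hk
      obtain ⟨hk1, hk2⟩ := Finset.mem_Icc.1 hk
      rw [hq (x - k) (by omega), hmain (x - k) (by omega)]
      have hxy : x - k - 1 = x - 1 - k := by omega
      rw [hxy]
    rw [Finset.sum_congr rfl hterm]
    refine Finset.sum_bij' (i := fun j _ => x - 1 - j) (j := fun k _ => x - 1 - k)
      ?_ ?_ ?_ ?_ ?_
    · intro j hj
      have := Finset.mem_range.1 hj
      exact Finset.mem_Icc.2 (by omega)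
    · intro k hk
      obtain ⟨hk1, hk2⟩ := Finset.mem_Icc.1 hk
      exact Finset.mem_range.2 (by omega)
    · intro j hj
      have := Finset.mem_range.1 hj
      omega
    · intro k hk
      obtain ⟨hk1, hk2⟩ := Finset.mem_Icc.1 hk
      omega
    · intro j hj
      have hjr := Finset.mem_range.1 hj
      have hxj : x - 1 - (x - 1 - j) = j := by omega
      rw [hxj]
      ring
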